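/- Let d₀, …, dₙ be positive integers with ∑_{i=0}^{n} 1/d_i = 1, let d = lcm(d₀, …, dₙ) and w_i = d/d_i. Let M(w) = {a ∈ ℤ^{n+1} : ∑ w_i a_i = 0} and let M_B(w) ⊆ M(w) be the subgroup generated by the n+1 vectors d_i·e_i − (1, 1, …, 1), i = 0, …, n (where e_i is the i-th standard basis vector). Then the quotient group M(w)/M_B(w) is isomorphic to the kernel of the group homomorphism γ̄ : (ZMod d₀ × ⋯ × ZMod dₙ)/⟨(1, …, 1)⟩ → ZMod d that sends the class of (a₀, …, aₙ) to ∑ w_i a_i modulo d (this map is well defined since w_i·d_i = d for each i and ∑ w_i = d ≡ 0 mod d). -/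
import Mathlib


open Finset

/-- Let `d₀, …, dₙ` be positive integers with `∑ 1/dᵢ = 1`,
`D = lcm(d₀, …, dₙ)` and `wᵢ = D/dᵢ`. Let `M(w) = {a ∈ ℤ^{n+1} | ∑ wᵢ aᵢ = 0}` and let
`M_B(w)` be its subgroup generated by the vectors `dᵢ·eᵢ - (1, …, 1)`. Let `γ̄` be the
group homomorphism `(ZMod d₀ × ⋯ × ZMod dₙ)/⟨(1, …, 1)⟩ → ZMod D` sending the class of
`a` to `∑ wᵢ aᵢ (mod D)`. Then `M(w)/M_B(w)` is isomorphic to the kernel of `γ̄`. -/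
theorem weight_quotient_iso_kernel
    (n : ℕ) (d : Fin (n + 1) → ℕ) (hd : ∀ i, 0 < d i)
    (hsum : ∑ i, (1 : ℚ) / (d i) = 1)
    (D : ℕ) (hD : D = Finset.univ.lcm d)
    (w : Fin (n + 1) → ℕ) (hw : ∀ i, w i = D / d i)
    (Mw : AddSubgroup (Fin (n + 1) → ℤ))
    (hMw : (Mw : Set (Fin (n + 1) → ℤ)) = {a | ∑ i, (w i : ℤ) * a i = 0})
    (MB : AddSubgroup (Fin (n + 1) → ℤ))
    (hMB : MB = AddSubgroup.closure
      (Set.range fun i : Fin (n + 1) =>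
        fun j : Fin (n + 1) => (if j = i then (d i : ℤ) else 0) - 1))
    (O : AddSubgroup (∀ i, ZMod (d i)))
    (hO : O = AddSubgroup.closure {fun i => (1 : ZMod (d i))})
    (γbar : ((∀ i, ZMod (d i)) ⧸ O) →+ ZMod D)
    (hγbar : ∀ a : ∀ i, ZMod (d i),
      γbar (QuotientAddGroup.mk a) = ∑ i, (w i : ZMod D) * ((a i).val : ZMod D)) :
    Nonempty ((↥Mw ⧸ MB.addSubgroupOf Mw) ≃+ ↥γbar.ker) := by
  haveI : ∀ i, NeZero (d i) := fun i => ⟨(hd i).ne'⟩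
  have hdvd : ∀ i, d i ∣ D := fun i => hD ▸ Finset.dvd_lcm (mem_univ i)
  have hD0 : 0 < D := by
    rw [hD]
    rcases Nat.eq_zero_or_pos (Finset.univ.lcm d) with h | h
    · rw [Finset.lcm_eq_zero_iff] at h
      obtain ⟨i, -, hi⟩ := h
      exact absurd hi.symm (hd i).ne
    · exact h
  have hwd : ∀ i, (w i : ℤ) * d i = D := by
    intro i
    rw [hw i]
    exact_mod_cast congrArg (Nat.cast : ℕ → ℤ) (Nat.div_mul_cancel (hdvd i))
  have hsumw : ∑ i, (w i : ℤ) = D := by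
    have hq : (∑ i, (w i : ℚ)) = D := by
      have : ∀ i, (w i : ℚ) = (D : ℚ) * (1 / d i) := by
        intro i
        rw [hw i, Nat.cast_div (hdvd i) (by exact_mod_cast (hd i).ne')]
        ring
      rw [Finset.sum_congr rfl fun i _ => this i, ← Finset.mul_sum, hsum, mul_one]
    exact_mod_cast hq
  -- reduction map
  set ρ : (Fin (n+1) → ℤ) →+ (∀ i, ZMod (d i)) :=
    AddMonoidHom.mk' (fun a i => ((a i : ℤ) : ZMod (d i)))
      (by intro a b; funext i; simp only [Pi.add_apply]; push_cast; ring) with hρ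
  set ψ : ↥Mw →+ ((∀ i, ZMod (d i)) ⧸ O) :=
    (QuotientAddGroup.mk' O).comp (ρ.comp Mw.subtype) with hψ
  have hmemMw : ∀ x : ↥Mw, ∑ i, (w i : ℤ) * (x : Fin (n+1) → ℤ) i = 0 := by
    intro x
    have := x.2
    rw [← AddSubgroup.mem_carrier] at this
    have h2 : (x : Fin (n+1) → ℤ) ∈ (Mw : Set (Fin (n+1) → ℤ)) := x.2
    rw [hMw] at h2
    exact h2
  -- ψ lands in ker γbar
  have hmem : ∀ x : ↥Mw, ψ x ∈ γbar.ker := by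
    intro x
    rw [AddMonoidHom.mem_ker]
    have hx := hmemMw x
    set a : Fin (n+1) → ℤ := (x : Fin (n+1) → ℤ) with ha
    have : ψ x = QuotientAddGroup.mk (fun i => ((a i : ℤ) : ZMod (d i))) := rfl
    rw [this, hγbar]
    have hdiv : ∀ i, (d i : ℤ) ∣ ((((a i : ℤ) : ZMod (d i)).val : ℤ) - a i) := by
      intro i
      rw [← ZMod.intCast_zmod_eq_zero_iff_dvd]
      push_cast
      simp [ZMod.natCast_val, ZMod.cast_id]
    have hDdvd : (D : ℤ) ∣ ∑ i, (w i : ℤ) * (((a i : ℤ) : ZMod (d i)).val : ℤ) := by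
      have : ∑ i, (w i : ℤ) * (((a i : ℤ) : ZMod (d i)).val : ℤ)
          = ∑ i, (w i : ℤ) * ((((a i : ℤ) : ZMod (d i)).val : ℤ) - a i) := by
        rw [← sub_eq_zero, ← Finset.sum_sub_distrib]
        calc ∑ i, ((w i : ℤ) * (((a i : ℤ) : ZMod (d i)).val : ℤ)
              - (w i : ℤ) * ((((a i : ℤ) : ZMod (d i)).val : ℤ) - a i))
            = ∑ i, (w i : ℤ) * a i := by apply Finset.sum_congr rfl; intros; ring
          _ = 0 := hx
      rw [this]
      apply Finset.dvd_sum
      intro i _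
      obtain ⟨q, hq⟩ := hdiv i
      exact ⟨q, by rw [hq, ← mul_assoc, hwd i]⟩
    calc ∑ i, (w i : ZMod D) * ((((a i : ℤ) : ZMod (d i)).val : ZMod D))
        = ((∑ i, (w i : ℤ) * (((a i : ℤ) : ZMod (d i)).val : ℤ) : ℤ) : ZMod D) := by
          push_cast; ring
      _ = 0 := by rwa [ZMod.intCast_zmod_eq_zero_iff_dvd]
  set φ : ↥Mw →+ ↥γbar.ker := ψ.codRestrict γbar.ker hmem with hφ
  -- surjectivity
  have hsurj : Function.Surjective φ := by
    rintro ⟨y, hy⟩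
    obtain ⟨b, rfl⟩ := QuotientAddGroup.mk'_surjective O y
    rw [AddMonoidHom.mem_ker] at hy
    rw [QuotientAddGroup.mk'_apply, hγbar] at hy
    have hnat : (D : ℤ) ∣ ∑ i, (w i : ℤ) * ((b i).val : ℤ) := by
      rw [← ZMod.intCast_zmod_eq_zero_iff_dvd]
      push_cast
      exact hy
    obtain ⟨k, hk⟩ := hnat
    set a : Fin (n+1) → ℤ := fun i => ((b i).val : ℤ) - k with haa
    have haMw : a ∈ Mw := by
      rw [← AddSubgroup.mem_carrier]
      show a ∈ (Mw : Set (Fin (n+1) → ℤ))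
      rw [hMw]
      show ∑ i, (w i : ℤ) * a i = 0
      have : ∑ i, (w i : ℤ) * a i
          = (∑ i, (w i : ℤ) * ((b i).val : ℤ)) - (∑ i, (w i : ℤ)) * k := by
        rw [Finset.sum_mul, ← Finset.sum_sub_distrib]
        apply Finset.sum_congr rfl; intros; simp [haa]; ring
      rw [this, hk, hsumw]; ring
    refine ⟨⟨a, haMw⟩, ?_⟩
    apply Subtype.ext
    show ψ ⟨a, haMw⟩ = QuotientAddGroup.mk' O b
    rw [hψ]
    simp only [AddMonoidHom.comp_apply, AddSubgroup.coe_subtype, QuotientAddGroup.mk'_apply]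
    rw [QuotientAddGroup.eq]
    rw [hO]
    have : -(ρ a) + b = fun i => ((k : ℤ) : ZMod (d i)) := by
      funext i
      show -(((a i : ℤ) : ZMod (d i))) + b i = ((k : ℤ) : ZMod (d i))
      rw [haa]
      push_cast
      simp [ZMod.natCast_val, ZMod.cast_id]
    rw [this]
    have hksmul : (fun i => ((k : ℤ) : ZMod (d i)))
        = k • (fun i => (1 : ZMod (d i))) := by
      funext i
      simp [zsmul_eq_mul]
    rw [hksmul]
    exact AddSubgroup.zsmul_mem _ (AddSubgroup.mem_closure_singleton_self _) k
  -- kernel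
  have hker : MB.addSubgroupOf Mw = φ.ker := by
    ext x
    rw [AddSubgroup.mem_addSubgroupOf, AddMonoidHom.mem_ker]
    have hφx : (φ x = 0) ↔ ψ x = 0 := by
      constructor
      · intro h; exact congrArg Subtype.val h
      · intro h; exact Subtype.ext h
    rw [hφx]
    have hψ0 : ψ x = 0 ↔ ρ (x : Fin (n+1) → ℤ) ∈ O := by
      rw [hψ]
      simp only [AddMonoidHom.comp_apply, AddSubgroup.coe_subtype]
      rw [← QuotientAddGroup.eq_zero_iff]
      rfl
    rw [hψ0]
    constructor
    · -- MB → ρ x ∈ O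
      intro hxMB
      have hle : MB ≤ O.comap ρ := by
        rw [hMB, AddSubgroup.closure_le]
        rintro _ ⟨i, rfl⟩
        show ρ _ ∈ O
        have : ρ (fun j => (if j = i then (d i : ℤ) else 0) - 1)
            = -(fun j => (1 : ZMod (d j))) := by
          funext j
          show (((if j = i then (d i : ℤ) else 0) - 1 : ℤ) : ZMod (d j)) = -1
          by_cases h : j = i
          · subst h; simp
          · simp [h]
        rw [this, hO]
        exact AddSubgroup.neg_mem _ (AddSubgroup.mem_closure_singleton_self _)
      exact hle hxMB
    · -- ρ x ∈ O → x ∈ MB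
      intro hxO
      rw [hO, AddSubgroup.mem_closure_singleton] at hxO
      obtain ⟨m, hm⟩ := hxO
      set a : Fin (n+1) → ℤ := (x : Fin (n+1) → ℤ) with ha
      have hmi : ∀ i, (d i : ℤ) ∣ a i - m := by
        intro i
        have h1 : ((a i : ℤ) : ZMod (d i)) = ((m : ℤ) : ZMod (d i)) := by
          have h2 := congrFun hm i
          simp only [Pi.smul_apply, zsmul_eq_mul, mul_one] at h2
          exact h2.symm
        rw [ZMod.intCast_eq_intCast_iff] at h1
        exact Int.ModEq.dvd h1.symm
      set c : Fin (n+1) → ℤ := fun i => (a i - m) / (d i) with hc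
      have hci : ∀ i, a i = c i * d i + m := by
        intro i
        rw [hc]
        simp only []
        rw [Int.ediv_mul_cancel (hmi i)]
        ring
      have hsumc : ∑ i, c i = -m := by
        have h0 := hmemMw x
        rw [← ha] at h0
        have heq : ∑ i, (w i : ℤ) * a i = (D : ℤ) * (∑ i, c i + m) := by
          calc ∑ i, (w i : ℤ) * a i
              = ∑ i, ((w i : ℤ) * (d i) * c i + (w i : ℤ) * m) := by
                apply Finset.sum_congr rfl; intro i _; rw [hci i]; ring
            _ = (∑ i, (w i : ℤ) * (d i) * c i) + (∑ i, (w i : ℤ)) * m := by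
                rw [Finset.sum_add_distrib, Finset.sum_mul]
            _ = (D : ℤ) * (∑ i, c i) + (D : ℤ) * m := by
                rw [hsumw, Finset.mul_sum]
                congr 1
                apply Finset.sum_congr rfl; intro i _; rw [hwd i]
            _ = (D : ℤ) * (∑ i, c i + m) := by ring
        rw [h0] at heq
        have hD' : (D : ℤ) ≠ 0 := by exact_mod_cast hD0.ne'
        have := (mul_eq_zero.mp heq.symm).resolve_left hD'
        linarith
      have hrep : a = ∑ i, c i • (fun j => (if j = i then (d i : ℤ) else 0) - 1) := by
        funext j
        rw [Finset.sum_apply]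
        simp only [Pi.smul_apply, smul_eq_mul]
        have hsplit : ∑ i, c i * ((if j = i then (d i : ℤ) else 0) - 1)
            = (∑ i, c i * (if j = i then (d i : ℤ) else 0)) - ∑ i, c i := by
          rw [← Finset.sum_sub_distrib]
          apply Finset.sum_congr rfl; intros; ring
        rw [hsplit, hsumc, Finset.sum_eq_single j]
        · rw [hci j]; simp
        · intro i _ hij
          simp [Ne.symm hij]
        · intro h; exact absurd (Finset.mem_univ j) h
      rw [hMB]
      show a ∈ AddSubgroup.closure _
      rw [hrep]
      exact AddSubgroup.sum_mem _ fun i _ =>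
        AddSubgroup.zsmul_mem _ (AddSubgroup.subset_closure (Set.mem_range_self i)) _
  have e1 : (↥Mw ⧸ MB.addSubgroupOf Mw) ≃+ (↥Mw ⧸ φ.ker) :=
    QuotientAddGroup.quotientAddEquivOfEq hker
  have e2 : (↥Mw ⧸ φ.ker) ≃+ ↥γbar.ker :=
    QuotientAddGroup.quotientKerEquivOfSurjective φ hsurj
  exact Nonempty.intro (e1.trans e2)
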